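/- For every real u ≥ 1 and integers 0 ≤ m ≤ N, 0 ≤ s ≤ N, if B ~ Binomial(s, m/N) and H ~ Hypergeometric(N, m, s), then E[u^B] ≥ E[u^H]. -/

import Mathlib

open Finset

/-- C(m,a)*C(a,k) = C(m,k)*C(m-k,a-k), valid whenever k ≤ a and k ≤ m. -/
lemma choose_mul' (m a k : ℕ) (hk : k ≤ a) (hkm : k ≤ m) :
    m.choose a * a.choose k = m.choose k * (m - k).choose (a - k) := by
  rcases le_or_gt a m with h | h
  · exact Nat.choose_mul hk
  · rw [Nat.choose_eq_zero_of_lt h, Nat.choose_eq_zero_of_lt (show m - k < a - k by omega),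
      Nat.zero_mul, Nat.mul_zero]

lemma key_sum (N m s k : ℕ) (hm : m ≤ N) (hk : k ≤ s) :
    ∑ a ∈ Finset.range (s + 1), m.choose a * ((N - m).choose (s - a)) * a.choose k
      = m.choose k * (N - k).choose (s - k) := by
  rcases lt_or_ge m k with hmk | hmk
  · rw [Nat.choose_eq_zero_of_lt hmk, Nat.zero_mul]
    apply Finset.sum_eq_zero
    intro a _
    rcases le_or_gt a m with h | h
    · rw [Nat.choose_eq_zero_of_lt (show a < k by omega), Nat.mul_zero]
    · rw [Nat.choose_eq_zero_of_lt h, Nat.zero_mul, Nat.zero_mul]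
  · -- k ≤ m ≤ N, k ≤ s
    rw [Finset.range_eq_Ico, ← Finset.sum_Ico_consecutive _ (Nat.zero_le k) (by omega : k ≤ s + 1)]
    have h1 : ∑ a ∈ Finset.Ico 0 k, m.choose a * ((N - m).choose (s - a)) * a.choose k = 0 := by
      apply Finset.sum_eq_zero
      intro a ha
      simp only [Finset.mem_Ico] at ha
      rw [Nat.choose_eq_zero_of_lt ha.2, Nat.mul_zero]
    rw [h1, Nat.zero_add, Finset.sum_Ico_eq_sum_range]
    have h2 : s + 1 - k = (s - k) + 1 := by omega
    rw [h2]
    have h3 : ∀ j ∈ Finset.range (s - k + 1),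
        m.choose (k + j) * ((N - m).choose (s - (k + j))) * (k + j).choose k
          = m.choose k * ((m - k).choose j * (N - m).choose (s - k - j)) := by
      intro j hj
      have e1 : m.choose (k + j) * (k + j).choose k = m.choose k * (m - k).choose j := by
        have := choose_mul' m (k + j) k (Nat.le_add_right _ _) hmk
        rwa [Nat.add_sub_cancel_left] at this
      have e2 : s - (k + j) = s - k - j := by omega
      rw [e2, Nat.mul_right_comm, e1, Nat.mul_assoc]
    rw [Finset.sum_congr rfl h3, ← Finset.mul_sum]
    congr 1
    have hv := Nat.add_choose_eq (m - k) (N - m) (s - k)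
    rw [Finset.Nat.sum_antidiagonal_eq_sum_range_succ_mk] at hv
    have : m - k + (N - m) = N - k := by omega
    rw [this] at hv
    exact hv.symm

lemma desc_le (N m k : ℕ) (hm : m ≤ N) :
    N ^ k * m.descFactorial k ≤ m ^ k * N.descFactorial k := by
  induction k with
  | zero => simp
  | succ k ih =>
    rw [Nat.descFactorial_succ, Nat.descFactorial_succ]
    rcases le_or_gt m k with h | h
    · rw [Nat.sub_eq_zero_of_le h, Nat.zero_mul, Nat.mul_zero]
      exact Nat.zero_le _
    · calc N ^ (k+1) * ((m - k) * m.descFactorial k)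
            = (N * (m - k)) * (N ^ k * m.descFactorial k) := by ring
        _ ≤ (m * (N - k)) * (m ^ k * N.descFactorial k) := by
            apply Nat.mul_le_mul _ ih
            have hkm : k ≤ m := le_of_lt h
            have hkN : k ≤ N := le_trans hkm hm
            zify [hkm, hkN]
            nlinarith [mul_le_mul_of_nonneg_right (show (m:ℤ) ≤ N by exact_mod_cast hm)
              (show (0:ℤ) ≤ k by positivity)]
        _ = m ^ (k+1) * ((N - k) * N.descFactorial k) := by ring

lemma coeff_le_nat (N m s k : ℕ) (hm : m ≤ N) (hk : k ≤ s) (hs : s ≤ N) :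
    m.choose k * (N - k).choose (s - k) * N ^ k ≤ s.choose k * m ^ k * N.choose s := by
  have h1 : N.choose s * s.choose k = N.choose k * (N - k).choose (s - k) :=
    Nat.choose_mul hk
  have h2 : N ^ k * m.choose k ≤ m ^ k * N.choose k := by
    have hd := desc_le N m k hm
    rw [Nat.descFactorial_eq_factorial_mul_choose, Nat.descFactorial_eq_factorial_mul_choose] at hd
    have : k.factorial * (N ^ k * m.choose k) ≤ k.factorial * (m ^ k * N.choose k) := by
      calc k.factorial * (N ^ k * m.choose k) = N ^ k * (k.factorial * m.choose k) := by ring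
        _ ≤ m ^ k * (k.factorial * N.choose k) := hd
        _ = k.factorial * (m ^ k * N.choose k) := by ring
    exact Nat.le_of_mul_le_mul_left this k.factorial_pos
  calc m.choose k * (N - k).choose (s - k) * N ^ k
      = (N ^ k * m.choose k) * (N - k).choose (s - k) := by ring
    _ ≤ (m ^ k * N.choose k) * (N - k).choose (s - k) := Nat.mul_le_mul_right _ h2
    _ = m ^ k * (N.choose k * (N - k).choose (s - k)) := by ring
    _ = m ^ k * (N.choose s * s.choose k) := by rw [h1]
    _ = s.choose k * m ^ k * N.choose s := by ring


/-- For u ≥ 1, the "moment generating function" E[u^B] of B ~ Binomial(s, m/N)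
dominates E[u^H] for H ~ Hypergeometric(N, m, s). -/
theorem binomial_mgf_ge_hypergeometric_mgf
    (N m s : ℕ) (hm : m ≤ N) (hs : s ≤ N) (u : ℝ) (hu : 1 ≤ u) :
    ∑ a ∈ Finset.range (s + 1),
        (s.choose a : ℝ) * ((m : ℝ) / (N : ℝ)) ^ a *
          (1 - (m : ℝ) / (N : ℝ)) ^ (s - a) * u ^ a ≥
      ∑ a ∈ Finset.range (s + 1),
        ((m.choose a : ℝ) * ((N - m).choose (s - a) : ℝ) / (N.choose s : ℝ)) *
          u ^ a := by
  rcases Nat.eq_zero_or_pos N with hN | hN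
  · subst hN
    interval_cases m
    interval_cases s
    norm_num
  set p : ℝ := (m : ℝ) / (N : ℝ) with hp
  set t : ℝ := u - 1 with htdef
  have ht : 0 ≤ t := by simp [htdef]; linarith
  have hut : u = 1 + t := by ring
  have hN0 : (0:ℝ) < N := by exact_mod_cast hN
  -- LHS identity
  have hL : ∑ a ∈ Finset.range (s + 1),
      (s.choose a : ℝ) * p ^ a * (1 - p) ^ (s - a) * u ^ a
      = ∑ k ∈ Finset.range (s + 1), (s.choose k : ℝ) * p ^ k * t ^ k := by
    have e1 : ∑ a ∈ Finset.range (s + 1),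
        (s.choose a : ℝ) * p ^ a * (1 - p) ^ (s - a) * u ^ a
        = (p * u + (1 - p)) ^ s := by
      rw [add_pow]
      apply Finset.sum_congr rfl
      intro a _
      rw [mul_pow]
      ring
    have e2 : p * u + (1 - p) = p * t + 1 := by rw [hut]; ring
    rw [e1, e2, add_pow]
    apply Finset.sum_congr rfl
    intro k _
    rw [mul_pow]
    ring
  -- RHS identity
  have hR : ∑ a ∈ Finset.range (s + 1),
      ((m.choose a : ℝ) * ((N - m).choose (s - a) : ℝ) / (N.choose s : ℝ)) * u ^ a
      = ∑ k ∈ Finset.range (s + 1),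
        ((m.choose k : ℝ) * ((N - k).choose (s - k) : ℝ) / (N.choose s : ℝ)) * t ^ k := by
    have e1 : ∀ a ∈ Finset.range (s + 1),
        ((m.choose a : ℝ) * ((N - m).choose (s - a) : ℝ) / (N.choose s : ℝ)) * u ^ a
        = ∑ k ∈ Finset.range (s + 1),
            ((m.choose a : ℝ) * ((N - m).choose (s - a) : ℝ) / (N.choose s : ℝ))
              * ((a.choose k : ℝ) * t ^ k) := by
      intro a ha
      rw [← Finset.mul_sum]
      congr 1
      simp only [Finset.mem_range] at ha
      have hb : u ^ a = (t + 1) ^ a := by rw [hut]; ring_nf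
      rw [hb, add_pow]
      simp only [one_pow, mul_one]
      have hext : ∑ k ∈ Finset.range (a + 1), t ^ k * (a.choose k : ℝ)
          = ∑ k ∈ Finset.range (s + 1), t ^ k * (a.choose k : ℝ) := by
        apply Finset.sum_subset (Finset.range_subset_range.2 (by omega))
        intro k _ hk
        simp only [Finset.mem_range, not_lt] at hk
        rw [Nat.choose_eq_zero_of_lt (show a < k by omega)]
        simp
      rw [hext]
      apply Finset.sum_congr rfl
      intro k _
      ring
    rw [Finset.sum_congr rfl e1, Finset.sum_comm]
    apply Finset.sum_congr rfl
    intro k hk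
    simp only [Finset.mem_range] at hk
    have hks : k ≤ s := by omega
    have hkey := key_sum N m s k hm hks
    have : ∑ a ∈ Finset.range (s + 1),
        ((m.choose a : ℝ) * ((N - m).choose (s - a) : ℝ) / (N.choose s : ℝ))
          * ((a.choose k : ℝ) * t ^ k)
        = (∑ a ∈ Finset.range (s + 1),
            (m.choose a : ℝ) * ((N - m).choose (s - a) : ℝ) * (a.choose k : ℝ))
            / (N.choose s : ℝ) * t ^ k := by
      rw [Finset.sum_div, Finset.sum_mul]
      apply Finset.sum_congr rfl
      intro a _
      ring
    rw [this]
    congr 2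
    exact_mod_cast hkey
  rw [ge_iff_le, hL, hR]
  apply Finset.sum_le_sum
  intro k hk
  simp only [Finset.mem_range] at hk
  have hks : k ≤ s := by omega
  have hcs : (0:ℝ) < (N.choose s : ℝ) := by
    exact_mod_cast Nat.choose_pos hs
  have hcoef : (m.choose k : ℝ) * ((N - k).choose (s - k) : ℝ) / (N.choose s : ℝ)
      ≤ (s.choose k : ℝ) * p ^ k := by
    rw [div_le_iff₀ hcs, hp, div_pow,
      show (s.choose k : ℝ) * ((m:ℝ)^k / (N:ℝ)^k) * (N.choose s : ℝ)
        = (s.choose k : ℝ) * (m:ℝ)^k * (N.choose s : ℝ) / (N:ℝ)^k by ring,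
      le_div_iff₀ (by positivity)]
    exact_mod_cast coeff_le_nat N m s k hm hks hs
  calc (m.choose k : ℝ) * ((N - k).choose (s - k) : ℝ) / (N.choose s : ℝ) * t ^ k
      ≤ (s.choose k : ℝ) * p ^ k * t ^ k :=
        mul_le_mul_of_nonneg_right hcoef (pow_nonneg ht k)
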